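/- For every real 3×3 matrix K, the image S = Φ(K) satisfies 3·det(S) + (1/4)·tr(S⁴) = 4·tr((K·Kᵀ)²). -/

import Mathlib

open Matrix

/-- The equivariant map Φ : ℝ^{3×3} → S²₀(ℝ⁴) of Lemma 3.1 (Madsen–Salamon). -/
def Phi (K : Matrix (Fin 3) (Fin 3) ℝ) : Matrix (Fin 4) (Fin 4) ℝ :=
  Matrix.of
    ![![-K 0 0 - K 1 1 - K 2 2, K 1 2 - K 2 1, -K 0 2 + K 2 0, K 0 1 - K 1 0],
      ![K 1 2 - K 2 1, -K 0 0 + K 1 1 + K 2 2, -K 0 1 - K 1 0, -K 0 2 - K 2 0],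
      ![-K 0 2 + K 2 0, -K 0 1 - K 1 0, K 0 0 - K 1 1 + K 2 2, -K 1 2 - K 2 1],
      ![K 0 1 - K 1 0, -K 0 2 - K 2 0, -K 1 2 - K 2 1, K 0 0 + K 1 1 - K 2 2]]

set_option maxHeartbeats 1000000 in
lemma det_fin_four' (A : Matrix (Fin 4) (Fin 4) ℝ) :
    A.det =
      A 0 0 * (A 1 1 * (A 2 2 * A 3 3 - A 2 3 * A 3 2) - A 1 2 * (A 2 1 * A 3 3 - A 2 3 * A 3 1)
        + A 1 3 * (A 2 1 * A 3 2 - A 2 2 * A 3 1))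
    - A 0 1 * (A 1 0 * (A 2 2 * A 3 3 - A 2 3 * A 3 2) - A 1 2 * (A 2 0 * A 3 3 - A 2 3 * A 3 0)
        + A 1 3 * (A 2 0 * A 3 2 - A 2 2 * A 3 0))
    + A 0 2 * (A 1 0 * (A 2 1 * A 3 3 - A 2 3 * A 3 1) - A 1 1 * (A 2 0 * A 3 3 - A 2 3 * A 3 0)
        + A 1 3 * (A 2 0 * A 3 1 - A 2 1 * A 3 0))
    - A 0 3 * (A 1 0 * (A 2 1 * A 3 2 - A 2 2 * A 3 1) - A 1 1 * (A 2 0 * A 3 2 - A 2 2 * A 3 0)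
        + A 1 2 * (A 2 0 * A 3 1 - A 2 1 * A 3 0)) := by
  rw [Matrix.det_succ_row_zero]
  simp [Fin.sum_univ_succ, Matrix.det_fin_three, Fin.succAbove,
    show Fin.succ (2:Fin 3) = 3 from rfl, show Fin.castSucc (2:Fin 3) = 2 from rfl]
  ring

set_option maxHeartbeats 2000000 in
theorem det_trace_quartic_Phi (K : Matrix (Fin 3) (Fin 3) ℝ) :
    3 * (Phi K).det + (1 / 4) * ((Phi K) ^ 4).trace = 4 * ((K * Kᵀ) ^ 2).trace := by
  have h4 : (Phi K) ^ 4 = Phi K * Phi K * (Phi K * Phi K) := by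
    rw [pow_succ, pow_succ, pow_two, mul_assoc]
  have h2 : (K * Kᵀ) ^ 2 = K * Kᵀ * (K * Kᵀ) := by rw [pow_two]
  rw [h4, h2, det_fin_four']
  simp only [Phi, Matrix.trace, Matrix.diag, Matrix.mul_apply,
    Fin.sum_univ_four, Fin.sum_univ_three,
    transpose_apply, of_apply, cons_val', cons_val_zero, cons_val_one, head_cons,
    cons_val_two, tail_cons, cons_val_three, head_fin_const, empty_val',
    cons_val_fin_one]
  ring
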